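/- If 1 ≤ k ≤ n and λ_k ∉ {a_0, …, a_n}, then ∑_{i=0}^{n} v_i / (a_i − λ_k)² = −λ_k · ∏_{l≠k}(λ_l − λ_k) / ∏_{i=0}^{n}(a_i − λ_k) (the diagonal metric coefficient of elliptic coordinates). -/

import Mathlib

open Finset Polynomial

lemma prod_neg' (s : Finset ℕ) (f : ℕ → ℝ) :
    ∏ j ∈ s, -f j = (-1) ^ s.card * ∏ j ∈ s, f j := by
  calc ∏ j ∈ s, -f j = ∏ j ∈ s, (-1) * f j :=
        Finset.prod_congr rfl fun j _ => (neg_one_mul _).symm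
    _ = (∏ _j ∈ s, (-1 : ℝ)) * ∏ j ∈ s, f j := Finset.prod_mul_distrib
    _ = (-1) ^ s.card * ∏ j ∈ s, f j := by rw [Finset.prod_const]

lemma key (s : Finset ℕ) (a : ℕ → ℝ) (hinj : Set.InjOn a s) (t : ℝ)
    (ht : ∀ j ∈ s, t ≠ a j) (P : ℝ[X]) (hdeg : P.degree < s.card) :
    ∑ i ∈ s, P.eval (a i) / ((a i - t) * ∏ j ∈ s.erase i, (a j - a i)) =
      P.eval t / ∏ j ∈ s, (a j - t) := by
  have hP := Lagrange.eq_interpolate (v := a) hinj hdeg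
  have hev := congrArg (Polynomial.eval t) hP
  rw [Lagrange.interpolate_apply, Polynomial.eval_finset_sum] at hev
  simp only [Polynomial.eval_mul, Polynomial.eval_C, Lagrange.basis, Lagrange.basisDivisor,
    Polynomial.eval_prod, Polynomial.eval_sub, Polynomial.eval_X] at hev
  set c : ℝ := (-1) ^ s.card with hc
  have hc2 : c * c = 1 := by
    rw [hc, ← pow_add]; exact Even.neg_one_pow ⟨s.card, rfl⟩
  have hc0 : c ≠ 0 := by rw [hc]; exact pow_ne_zero _ (by norm_num)
  have hD : ∏ j ∈ s, (t - a j) ≠ 0 :=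
    Finset.prod_ne_zero_iff.mpr fun j hj => sub_ne_zero.mpr (ht j hj)
  have hps : ∏ j ∈ s, (a j - t) = c * ∏ j ∈ s, (t - a j) := by
    rw [hc, ← prod_neg']
    exact Finset.prod_congr rfl fun j _ => by ring
  have hpe : ∀ i ∈ s, ∏ j ∈ s.erase i, (a j - a i)
      = -c * ∏ j ∈ s.erase i, (a i - a j) := by
    intro i hi
    have hcard : (s.erase i).card + 1 = s.card := Finset.card_erase_add_one hi
    have : ∏ j ∈ s.erase i, (a j - a i)
        = (-1) ^ (s.erase i).card * ∏ j ∈ s.erase i, (a i - a j) := by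
      rw [← prod_neg']
      exact Finset.prod_congr rfl fun j _ => by ring
    rw [this, hc, ← hcard, pow_succ]; ring
  clear_value c
  clear hc
  have hterm : ∀ i ∈ s,
      P.eval (a i) / ((a i - t) * ∏ j ∈ s.erase i, (a j - a i)) =
        c * ((P.eval (a i) * ∏ j ∈ s.erase i, ((a i - a j)⁻¹ * (t - a j))) /
          ∏ j ∈ s, (t - a j)) := by
    intro i hi
    have hsplit : ∏ j ∈ s, (t - a j) = (t - a i) * ∏ j ∈ s.erase i, (t - a j) :=
      (Finset.mul_prod_erase s _ hi).symm
    have h1 : (t - a i) ≠ 0 := sub_ne_zero.mpr (ht i hi)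
    have h2 : ∏ j ∈ s.erase i, (t - a j) ≠ 0 :=
      Finset.prod_ne_zero_iff.mpr fun j hj => sub_ne_zero.mpr (ht j (Finset.mem_of_mem_erase hj))
    have h3 : ∏ j ∈ s.erase i, (a i - a j) ≠ 0 :=
      Finset.prod_ne_zero_iff.mpr fun j hj => sub_ne_zero.mpr
        (fun h => (Finset.ne_of_mem_erase hj).symm (hinj hi (Finset.mem_of_mem_erase hj) h))
    have hE : (∏ j ∈ s.erase i, (a i - a j))⁻¹ * (∏ j ∈ s.erase i, (a i - a j)) = 1 :=
      inv_mul_cancel₀ h3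
    rw [Finset.prod_mul_distrib, Finset.prod_inv_distrib, hsplit, hpe i hi,
      show (a i - t) * (-c * ∏ j ∈ s.erase i, (a i - a j))
        = c * ((t - a i) * ∏ j ∈ s.erase i, (a i - a j)) from by ring,
      mul_div_assoc',
      div_eq_div_iff (mul_ne_zero hc0 (mul_ne_zero h1 h3)) (mul_ne_zero h1 h2)]
    linear_combination (-(P.eval (a i) * (∏ j ∈ s.erase i, (t - a j)) * (t - a i) *
        (∏ j ∈ s.erase i, (a i - a j))⁻¹ * (∏ j ∈ s.erase i, (a i - a j)))) * hc2 +
      (-(P.eval (a i) * (∏ j ∈ s.erase i, (t - a j)) * (t - a i))) * hE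
  rw [Finset.sum_congr rfl hterm, ← Finset.mul_sum, ← Finset.sum_div, hev, hps,
    mul_div_assoc', div_eq_div_iff hD (mul_ne_zero hc0 hD)]
  linear_combination ((∑ x ∈ s, P.eval (a x) * ∏ j ∈ s.erase x, ((a x - a j)⁻¹ * (t - a j))) *
    ∏ j ∈ s, (t - a j)) * hc2

/-- diagonal metric coefficient of elliptic coordinates.  If
`λ_k ∉ {a_0,…,a_n}`, then `∑_{i=0}^{n} v_i/(a_i−λ_k)² =
−λ_k·∏_{l≠k}(λ_l−λ_k)/∏_{i=0}^{n}(a_i−λ_k)`. -/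
theorem stmt_14 (n : ℕ) (hn : 1 ≤ n) (a : ℕ → ℝ)
    (ha : ∀ i ≤ n, ∀ j ≤ n, i ≠ j → a i ≠ a j)
    (lam : ℕ → ℝ) (v : ℕ → ℝ)
    (hv : ∀ i ≤ n, v i = a i * (∏ k ∈ Finset.Icc 1 n, (lam k - a i)) /
      ∏ j ∈ (Finset.range (n + 1)).erase i, (a j - a i))
    (k : ℕ) (hk : 1 ≤ k) (hk2 : k ≤ n)
    (hlk : ∀ i ≤ n, lam k ≠ a i) :
    ∑ i ∈ Finset.range (n + 1), v i / (a i - lam k) ^ 2 =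
      -lam k * (∏ l ∈ (Finset.Icc 1 n).erase k, (lam l - lam k)) /
        ∏ i ∈ Finset.range (n + 1), (a i - lam k) := by
  set t := lam k with htdef
  set s := Finset.range (n + 1) with hsdef
  have hmem : ∀ i, i ∈ s ↔ i ≤ n := by
    intro i; rw [hsdef, Finset.mem_range, Nat.lt_succ_iff]
  have hinj : Set.InjOn a s := by
    intro i hi j hj h
    by_contra hne
    exact ha i ((hmem i).mp hi) j ((hmem j).mp hj) hne h
  have ht : ∀ j ∈ s, t ≠ a j := fun j hj => hlk j ((hmem j).mp hj)
  have hkmem : k ∈ Finset.Icc 1 n := Finset.mem_Icc.mpr ⟨hk, hk2⟩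
  set P : ℝ[X] := -(X * ∏ m ∈ (Finset.Icc 1 n).erase k, (Polynomial.C (lam m) - X))
    with hPdef
  have hndQ : (∏ m ∈ (Finset.Icc 1 n).erase k,
      (Polynomial.C (lam m) - X)).natDegree ≤ ((Finset.Icc 1 n).erase k).card := by
    refine le_trans (Polynomial.natDegree_prod_le _ _) ?_
    calc ∑ m ∈ (Finset.Icc 1 n).erase k, (Polynomial.C (lam m) - X).natDegree
        ≤ ∑ _m ∈ (Finset.Icc 1 n).erase k, 1 := by
          refine Finset.sum_le_sum fun m _ => ?_
          refine le_trans (Polynomial.natDegree_sub_le _ _) ?_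
          simp [Polynomial.natDegree_C, Polynomial.natDegree_X]
      _ = _ := by rw [Finset.sum_const, smul_eq_mul, mul_one]
  have hcardE : ((Finset.Icc 1 n).erase k).card = n - 1 := by
    rw [Finset.card_erase_of_mem hkmem, Nat.card_Icc]; omega
  have hndP : P.natDegree ≤ n := by
    rw [hPdef, Polynomial.natDegree_neg]
    refine le_trans (Polynomial.natDegree_mul_le) ?_
    rw [Polynomial.natDegree_X]
    omega
  have hdeg : P.degree < (s.card : WithBot ℕ) := by
    have h1 : P.degree ≤ (P.natDegree : WithBot ℕ) := Polynomial.degree_le_natDegree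
    have h2 : (P.natDegree : WithBot ℕ) ≤ (n : WithBot ℕ) := by exact_mod_cast hndP
    have h3 : (n : WithBot ℕ) < ((n + 1 : ℕ) : WithBot ℕ) := by exact_mod_cast Nat.lt_succ_self n
    rw [hsdef, Finset.card_range]
    exact lt_of_le_of_lt (le_trans h1 h2) h3
  have hkey := key s a hinj t ht P hdeg
  have hevalP : ∀ x : ℝ, P.eval x = -(x * ∏ m ∈ (Finset.Icc 1 n).erase k, (lam m - x)) := by
    intro x
    rw [hPdef]
    simp [Polynomial.eval_prod]
  have hDne : ∀ i ∈ s, ∏ j ∈ s.erase i, (a j - a i) ≠ 0 := by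
    intro i hi
    refine Finset.prod_ne_zero_iff.mpr fun j hj => sub_ne_zero.mpr fun h => ?_
    exact (Finset.ne_of_mem_erase hj) (hinj (Finset.mem_of_mem_erase hj) hi h)
  have hterm : ∀ i ∈ s, v i / (a i - t) ^ 2 =
      P.eval (a i) / ((a i - t) * ∏ j ∈ s.erase i, (a j - a i)) := by
    intro i hi
    rw [hv i ((hmem i).mp hi), hevalP,
      ← Finset.mul_prod_erase (Finset.Icc 1 n) (fun m => lam m - a i) hkmem]
    have h1 : a i - t ≠ 0 := sub_ne_zero.mpr fun h => ht i hi h.symm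
    have h2 := hDne i hi
    field_simp
    ring
  rw [Finset.sum_congr rfl hterm, hkey, hevalP]
  simp only [neg_mul]
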